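/- A frame validates the axioms ⟨e⟩p → ⟨e⁺⟩p, ⟨e⟩⟨e⁺⟩p → ⟨e⁺⟩p, and ⟨e⁺⟩p → ⟨e⟩p ∨ ⟨e⁺⟩(¬p ∧ ⟨e⟩p) if and only if R_{e⁺} is the transitive closure of R_e. -/

import Mathlib

inductive Fm (A : Type) : Type
  | bot : Fm A
  | var : ℕ → Fm A
  | imp : Fm A → Fm A → Fm A
  | dia : A → Fm A → Fm A

namespace Fm
variable {A B : Type}
def neg (φ : Fm A) : Fm A := imp φ bot
def disj (φ ψ : Fm A) : Fm A := imp (neg φ) ψ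
def conj (φ ψ : Fm A) : Fm A := neg (imp φ (neg ψ))
def equiv (φ ψ : Fm A) : Fm A := conj (imp φ ψ) (imp ψ φ)
def box (a : A) (φ : Fm A) : Fm A := neg (dia a (neg φ))
def map (f : A → B) : Fm A → Fm B
  | bot => bot
  | var n => var n
  | imp φ ψ => imp (map f φ) (map f ψ)
  | dia a φ => dia (f a) (map f φ)
end Fm

structure Model (A : Type) where
  W : Type
  R : A → W → W → Prop
  V : ℕ → W → Prop

def Sat {A : Type} (M : Model A) : M.W → Fm A → Prop
  | _, .bot => False
  | x, .var n => M.V n x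
  | x, .imp φ ψ => Sat M x φ → Sat M x ψ
  | x, .dia a φ => ∃ y, M.R a x y ∧ Sat M y φ

def Model.valid {A : Type} (M : Model A) (φ : Fm A) : Prop := ∀ x, Sat M x φ

def Model.validSet {A : Type} (M : Model A) (L : Set (Fm A)) : Prop := ∀ φ ∈ L, M.valid φ

def SubClosed {A : Type} (Γ : Set (Fm A)) : Prop :=
  (∀ φ ψ : Fm A, Fm.imp φ ψ ∈ Γ → φ ∈ Γ ∧ ψ ∈ Γ) ∧
  (∀ (a : A) (φ : Fm A), Fm.dia a φ ∈ Γ → φ ∈ Γ)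

/-- `x ∼_Γ y`: x and y satisfy the same formulas of Γ in M. -/
def ModEqv {A : Type} (M : Model A) (Γ : Set (Fm A)) (x y : M.W) : Prop :=
  ∀ φ ∈ Γ, (Sat M x φ ↔ Sat M y φ)

def eqvSetoid {A : Type} (M : Model A) (Γ : Set (Fm A)) : Setoid M.W :=
  ⟨ModEqv M Γ, ⟨fun _ _ _ => Iff.rfl, fun h φ hφ => (h φ hφ).symm,
    fun h1 h2 φ hφ => (h1 φ hφ).trans (h2 φ hφ)⟩⟩

def filtModel {A : Type} (M : Model A) (s : Setoid M.W)
    (R' : A → Quotient s → Quotient s → Prop) (V' : ℕ → Quotient s → Prop) : Model A :=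
  ⟨Quotient s, R', V'⟩

/-- `(filtModel M s R' V')` is a Γ-filtration of M through the equivalence s. -/
structure IsGammaFiltration {A : Type} (M : Model A) (Γ : Set (Fm A)) (s : Setoid M.W)
    (R' : A → Quotient s → Quotient s → Prop) (V' : ℕ → Quotient s → Prop) : Prop where
  refines : ∀ x y : M.W, s.r x y → ModEqv M Γ x y
  val : ∀ n : ℕ, Fm.var n ∈ Γ → ∀ x : M.W, (V' n (Quotient.mk s x) ↔ M.V n x)
  min_sub : ∀ (a : A) (x y : M.W), M.R a x y → R' a (Quotient.mk s x) (Quotient.mk s y)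
  sub_max : ∀ (a : A) (x y : M.W), R' a (Quotient.mk s x) (Quotient.mk s y) →
      ∀ φ : Fm A, Fm.dia a φ ∈ Γ → Sat M y φ → Sat M x (Fm.dia a φ)

/-- L admits definable filtration. -/
def AdmitsDefFilt {A : Type} (L : Set (Fm A)) : Prop :=
  ∀ M : Model A, M.validSet L → ∀ Γ : Set (Fm A), Γ.Finite → SubClosed Γ →
    ∃ Δ : Set (Fm A), Δ.Finite ∧ Γ ⊆ Δ ∧
      ∃ (R' : A → Quotient (eqvSetoid M Δ) → Quotient (eqvSetoid M Δ) → Prop)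
        (V' : ℕ → Quotient (eqvSetoid M Δ) → Prop),
        Finite (Quotient (eqvSetoid M Δ)) ∧
        IsGammaFiltration M Γ (eqvSetoid M Δ) R' V' ∧
        (filtModel M (eqvSetoid M Δ) R' V').validSet L

private lemma aux5 {W : Type} (Re : W → W → Prop) (p : W → Prop) {x y : W}
    (h : Relation.TransGen Re x y) :
    p y → (∃ w, Re x w ∧ p w) ∨
      ∃ w, Relation.TransGen Re x w ∧ ¬ p w ∧ ∃ u, Re w u ∧ p u := by
  induction h with
  | single h => exact fun hy => Or.inl ⟨_, h, hy⟩
  | @tail b c hxb hbc ih =>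
    intro hc
    by_cases hpb : p b
    · exact ih hpb
    · exact Or.inr ⟨b, hxb, hpb, c, hbc, hc⟩

/-- A frame validates A3, A4, A5 iff R_{e⁺} is the transitive closure of R_e.
Modalities: `true` is ⟨e⟩ (relation Re), `false` is ⟨e⁺⟩ (relation Rp). -/
theorem transitive_closure_axioms_characterization (W : Type) (Re Rp : W → W → Prop) :
    (∀ (V : ℕ → W → Prop) (x : W),
      Sat (Model.mk W (fun b : Bool => if b then Re else Rp) V) x
        (Fm.imp (Fm.dia true (Fm.var 0)) (Fm.dia false (Fm.var 0))) ∧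
      Sat (Model.mk W (fun b : Bool => if b then Re else Rp) V) x
        (Fm.imp (Fm.dia true (Fm.dia false (Fm.var 0))) (Fm.dia false (Fm.var 0))) ∧
      Sat (Model.mk W (fun b : Bool => if b then Re else Rp) V) x
        (Fm.imp (Fm.dia false (Fm.var 0))
          (Fm.disj (Fm.dia true (Fm.var 0))
            (Fm.dia false (Fm.conj (Fm.neg (Fm.var 0)) (Fm.dia true (Fm.var 0))))))) ↔
    (∀ x y : W, Rp x y ↔ Relation.TransGen Re x y) := by
  constructor
  · intro h x y
    have h3 : ∀ a b : W, Re a b → Rp a b := by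
      intro a b hab
      have h1 := (h (fun _ z => z = b) a).1
      simp only [Sat, Bool.false_eq_true, if_false, if_true] at h1
      obtain ⟨w, hw, rfl⟩ := h1 ⟨b, hab, rfl⟩
      exact hw
    have h4 : ∀ a b c : W, Re a b → Rp b c → Rp a c := by
      intro a b c hab hbc
      have h2 := (h (fun _ z => z = c) a).2.1
      simp only [Sat, Bool.false_eq_true, if_false, if_true] at h2
      obtain ⟨w, hw, rfl⟩ := h2 ⟨b, hab, c, hbc, rfl⟩
      exact hw
    constructor
    · intro hxy
      by_contra hn
      have h5 := (h (fun _ z => ¬ Relation.TransGen Re x z) x).2.2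
      simp only [Sat, Bool.false_eq_true, if_false, if_true] at h5
      rcases h5 ⟨y, hxy, hn⟩
          (fun ⟨w, hw, hnw⟩ => hnw (Relation.TransGen.single hw)) with ⟨w, _, hw⟩
      refine hw fun hnp hex => ?_
      obtain ⟨u, hwu, hnu⟩ := hex
      exact hnu ((not_not.1 hnp).tail hwu)
    · intro ht
      induction ht using Relation.TransGen.head_induction_on with
      | single hre => exact h3 _ _ hre
      | head hre _ ihp => exact h4 _ _ _ hre ihp
  · intro heq V x
    refine ⟨?_, ?_, ?_⟩ <;>
      simp only [Sat, Fm.disj, Fm.conj, Fm.neg, Bool.false_eq_true, if_false, if_true]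
    · rintro ⟨y, hxy, hy⟩
      exact ⟨y, (heq x y).2 (Relation.TransGen.single hxy), hy⟩
    · rintro ⟨z, hxz, y, hzy, hy⟩
      exact ⟨y, (heq x y).2 (Relation.TransGen.head hxz ((heq z y).1 hzy)), hy⟩
    · rintro ⟨y, hxy, hy⟩ hne
      rcases aux5 Re (V 0) ((heq x y).1 hxy) hy with h' | ⟨w, hxw, hnw, u, hwu, hu⟩
      · exact absurd h' hne
      · exact ⟨w, (heq x w).2 hxw, fun hc => hc (fun hw => hnw hw) ⟨u, hwu, hu⟩⟩
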